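/- Let q ∈ {2,3} and s ≥ 2. Then there exists an invertible matrix Y ∈ GL_s(F_q) such that Y·Y^T − I_s is invertible. -/

import Mathlib

open Matrix

lemma myFromBlocksSubOne {F : Type*} [Field F] {a b : ℕ}
    (X : Matrix (Fin a) (Fin a) F) (Z : Matrix (Fin b) (Fin b) F) :
    Matrix.fromBlocks X 0 0 Z - 1 = Matrix.fromBlocks (X - 1) 0 0 (Z - 1) := by
  rw [sub_eq_iff_eq_add, ← Matrix.fromBlocks_one, Matrix.fromBlocks_add]
  simp

lemma myCombine {F : Type*} [Field F] {a b : ℕ}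
    (ha : ∃ Y : Matrix (Fin a) (Fin a) F, IsUnit Y ∧ IsUnit (Y * Yᵀ - 1))
    (hb : ∃ Y : Matrix (Fin b) (Fin b) F, IsUnit Y ∧ IsUnit (Y * Yᵀ - 1)) :
    ∃ Y : Matrix (Fin (a+b)) (Fin (a+b)) F, IsUnit Y ∧ IsUnit (Y * Yᵀ - 1) := by
  obtain ⟨A, hA, hA'⟩ := ha
  obtain ⟨B, hB, hB'⟩ := hb
  set e := Matrix.reindexAlgEquiv F F (finSumFinEquiv : Fin a ⊕ Fin b ≃ Fin (a+b)) with he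
  have et : ∀ M : Matrix (Fin a ⊕ Fin b) (Fin a ⊕ Fin b) F, (e M)ᵀ = e Mᵀ := by
    intro M
    simp [he, Matrix.reindexAlgEquiv_apply, Matrix.reindex_apply, Matrix.transpose_submatrix]
  have hdet : ∀ M : Matrix (Fin a ⊕ Fin b) (Fin a ⊕ Fin b) F, IsUnit M → IsUnit (e M) :=
    fun M hM => hM.map e.toRingEquiv.toRingHom
  refine ⟨e (Matrix.fromBlocks A 0 0 B), ?_, ?_⟩
  · apply hdet
    rw [Matrix.isUnit_iff_isUnit_det, Matrix.det_fromBlocks_zero₂₁]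
    exact ((Matrix.isUnit_iff_isUnit_det A).mp hA).mul ((Matrix.isUnit_iff_isUnit_det B).mp hB)
  · rw [et, ← _root_.map_mul, ← _root_.map_one e, ← _root_.map_sub]
    apply hdet
    have h1 : (Matrix.fromBlocks A 0 0 B)ᵀ = Matrix.fromBlocks Aᵀ 0 0 Bᵀ := by
      simp [Matrix.fromBlocks_transpose]
    rw [h1, Matrix.fromBlocks_multiply]
    simp only [Matrix.mul_zero, Matrix.zero_mul, add_zero, zero_add, mul_zero, zero_mul]
    rw [myFromBlocksSubOne, Matrix.isUnit_iff_isUnit_det, Matrix.det_fromBlocks_zero₂₁]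
    exact ((Matrix.isUnit_iff_isUnit_det _).mp hA').mul ((Matrix.isUnit_iff_isUnit_det _).mp hB')

lemma myBase2 {F : Type*} [Field F] (h6 : (6:F) = 0) :
    ∃ Y : Matrix (Fin 2) (Fin 2) F, IsUnit Y ∧ IsUnit (Y * Yᵀ - 1) := by
  refine ⟨!![(1:F),1;1,2], ?_, ?_⟩
  · rw [Matrix.isUnit_iff_isUnit_det, Matrix.det_fin_two]
    norm_num
  · have ht : (!![(1:F),1;1,2])ᵀ = !![(1:F),1;1,2] := by
      ext i j; fin_cases i <;> fin_cases j <;> rfl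
    rw [ht, Matrix.mul_fin_two, Matrix.isUnit_iff_isUnit_det]
    have h1 : (!![(1:F)*1+1*1, 1*1+1*2; 1*1+2*1, 1*1+2*2] - 1) = !![(1:F),3;3,4] := by
      ext i j
      fin_cases i <;> fin_cases j <;>
        simp [Matrix.one_apply, Matrix.vecHead, Matrix.vecTail] <;> norm_num
    rw [h1, Matrix.det_fin_two]
    have h2 : !![(1:F),3;3,4] 0 0 * !![(1:F),3;3,4] 1 1 -
        !![(1:F),3;3,4] 0 1 * !![(1:F),3;3,4] 1 0 = 1 := by
      simp; linear_combination -h6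
    rw [h2]; exact isUnit_one

lemma myBase3 {F : Type*} [Field F] :
    ∃ Y : Matrix (Fin 3) (Fin 3) F, IsUnit Y ∧ IsUnit (Y * Yᵀ - 1) := by
  refine ⟨!![(0:F),0,1;0,1,1;1,1,0], ?_, ?_⟩
  · rw [Matrix.isUnit_iff_isUnit_det, Matrix.det_fin_three]
    norm_num [Fin.isValue, Matrix.cons_val_two, Matrix.tail_cons, Matrix.head_cons]
  · have ht : (!![(0:F),0,1;0,1,1;1,1,0])ᵀ = !![(0:F),0,1;0,1,1;1,1,0] := by
      ext i j; fin_cases i <;> fin_cases j <;> rfl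
    rw [ht, Matrix.mul_fin_three, Matrix.isUnit_iff_isUnit_det]
    have h1 : (!![(0:F)*0+0*0+1*1, 0*0+0*1+1*1, 0*1+0*1+1*0;
                 0*0+1*0+1*1, 0*0+1*1+1*1, 0*1+1*1+1*0;
                 1*0+1*0+0*1, 1*0+1*1+0*1, 1*1+1*1+0*0] - 1) = !![(0:F),1,0;1,1,1;0,1,1] := by
      ext i j
      fin_cases i <;> fin_cases j <;>
        simp [Matrix.one_apply, Matrix.vecHead, Matrix.vecTail] <;> norm_num
    rw [h1, Matrix.det_fin_three]
    have h2 : (!![(0:F),1,0;1,1,1;0,1,1] 0 0 * !![(0:F),1,0;1,1,1;0,1,1] 1 1 * !![(0:F),1,0;1,1,1;0,1,1] 2 2 -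
        !![(0:F),1,0;1,1,1;0,1,1] 0 0 * !![(0:F),1,0;1,1,1;0,1,1] 1 2 * !![(0:F),1,0;1,1,1;0,1,1] 2 1 -
        !![(0:F),1,0;1,1,1;0,1,1] 0 1 * !![(0:F),1,0;1,1,1;0,1,1] 1 0 * !![(0:F),1,0;1,1,1;0,1,1] 2 2 +
        !![(0:F),1,0;1,1,1;0,1,1] 0 1 * !![(0:F),1,0;1,1,1;0,1,1] 1 2 * !![(0:F),1,0;1,1,1;0,1,1] 2 0 +
        !![(0:F),1,0;1,1,1;0,1,1] 0 2 * !![(0:F),1,0;1,1,1;0,1,1] 1 0 * !![(0:F),1,0;1,1,1;0,1,1] 2 1 -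
        !![(0:F),1,0;1,1,1;0,1,1] 0 2 * !![(0:F),1,0;1,1,1;0,1,1] 1 1 * !![(0:F),1,0;1,1,1;0,1,1] 2 0) = -1 := by
      norm_num [Fin.isValue, Matrix.cons_val_two, Matrix.tail_cons, Matrix.head_cons]
    rw [h2]; exact isUnit_one.neg

theorem exists_Y_isUnit_mul_transpose_sub_one {F : Type*} [Field F] [Fintype F]
    (hq : Fintype.card F = 2 ∨ Fintype.card F = 3) {s : ℕ} (hs : 2 ≤ s) :
    ∃ Y : Matrix (Fin s) (Fin s) F, IsUnit Y ∧ IsUnit (Y * Yᵀ - 1) := by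
  have h6 : (6 : F) = 0 := by
    have hc : ((Fintype.card F : ℕ) : F) = 0 := FiniteField.cast_card_eq_zero F
    rcases hq with h | h <;> rw [h] at hc <;> push_cast at hc
    · linear_combination 3 * hc
    · linear_combination 2 * hc
  induction s using Nat.strong_induction_on with
  | _ s ih =>
    rcases lt_or_ge s 4 with h4 | h4
    · interval_cases s
      · exact myBase2 h6
      · exact myBase3
    · have h2 : 2 ≤ s - 2 := by omega
      have hlt : s - 2 < s := by omega
      have := myCombine (ih (s - 2) hlt h2) (myBase2 h6)
      rwa [Nat.sub_add_cancel (by omega)] at this
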